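/- arXiv:2302.07341 — 2 statements merged into one kernel-verified Lean document; each statement's English description precedes it below -/
import Mathlib

section
/- Let π : ℝ³ → ℝ² denote the vertical projection π(x, y, z) = (x, y). Let ζ ≥ 0, let a₁, …, a_n be vectors in ℝ² and b₁, …, b_n ∈ ℝ with affine functionals h_l(x) = ⟨a_l, x⟩ + b_l, and let U = {x ∈ ℝ² : h_l(x) ≤ ‖a_l‖·ζ for all l = 1, …, n} be the inflated polyhedron. Let s ∈ ℝ³ with third coordinate s₃ > 0. Let P₁ ⊆ ℝ³ be a set of points each of whose third coordinate q₃ satisfies 0 ≤ q₃ < s₃, and suppose: (i) for every q ∈ P₁ there exists a point x' ∈ ℝ³ with ‖q − x'‖ ≤ ζ and h_l(π(x')) ≤ 0 for all l; and (ii) for every q ∈ P₁, the oblique projection p₀(q) = s + (s₃/(s₃ − q₃))·(q − s) satisfies π(p₀(q)) ∈ U. Let P₂ = { s + u·(q − s) : q ∈ P₁, u ∈ [1, s₃/(s₃ − q₃)] } be the set of points occluded by P₁. Then π(P₁ ∪ P₂) ⊆ U. -/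
open scoped RealInnerProductSpace

/-- The vertical projection `π : ℝ³ → ℝ²`, `π (x, y, z) = (x, y)`. -/
def vertProj (p : EuclideanSpace ℝ (Fin 3)) : EuclideanSpace ℝ (Fin 2) := WithLp.toLp 2 ![p 0, p 1]

lemma vertProj_sub (x y : EuclideanSpace ℝ (Fin 3)) :
    vertProj (x - y) = vertProj x - vertProj y := by
  ext i
  fin_cases i <;> simp [vertProj]

lemma vertProj_add (x y : EuclideanSpace ℝ (Fin 3)) :
    vertProj (x + y) = vertProj x + vertProj y := by
  ext i
  fin_cases i <;> simp [vertProj]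

lemma vertProj_smul (c : ℝ) (x : EuclideanSpace ℝ (Fin 3)) :
    vertProj (c • x) = c • vertProj x := by
  ext i
  fin_cases i <;> simp [vertProj]

lemma norm_vertProj_le (x : EuclideanSpace ℝ (Fin 3)) : ‖vertProj x‖ ≤ ‖x‖ := by
  rw [EuclideanSpace.norm_eq, EuclideanSpace.norm_eq]
  apply Real.sqrt_le_sqrt
  rw [Fin.sum_univ_two, Fin.sum_univ_three]
  simp only [vertProj, PiLp.toLp_apply, Matrix.cons_val_zero, Matrix.cons_val_one, Matrix.head_cons]
  nlinarith [sq_nonneg (x 2), sq_abs (x 0), sq_abs (x 1), sq_abs (x 2)]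

/-- Abstract form of Lemma 1 of the paper: the occupied area (the inflated polyhedron
`U`) contains the vertical projection of the whole obstacle `P₁ ∪ P₂`, where `P₁` are
the points in the line of sight of the LiDAR at `s` (each within `ζ` of a scan point
whose projection satisfies the unrelaxed constraints, and whose oblique projection lies
in `U`), and `P₂` are the points occluded by `P₁`. -/
theorem occupied_area_covers_obstacle_projection {n : ℕ} (ζ : ℝ) (hζ : 0 ≤ ζ)
    (a : Fin n → EuclideanSpace ℝ (Fin 2)) (b : Fin n → ℝ)
    (U : Set (EuclideanSpace ℝ (Fin 2)))
    (hU : U = {x : EuclideanSpace ℝ (Fin 2) | ∀ l, ⟪a l, x⟫ + b l ≤ ‖a l‖ * ζ})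
    (s : EuclideanSpace ℝ (Fin 3)) (hs : 0 < s 2)
    (P₁ : Set (EuclideanSpace ℝ (Fin 3)))
    (hP₁z : ∀ q ∈ P₁, 0 ≤ q 2 ∧ q 2 < s 2)
    (hscan : ∀ q ∈ P₁, ∃ x' : EuclideanSpace ℝ (Fin 3),
      ‖q - x'‖ ≤ ζ ∧ ∀ l, ⟪a l, vertProj x'⟫ + b l ≤ 0)
    (hobl : ∀ q ∈ P₁, vertProj (s + (s 2 / (s 2 - q 2)) • (q - s)) ∈ U)
    (P₂ : Set (EuclideanSpace ℝ (Fin 3)))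
    (hP₂ : P₂ = {p : EuclideanSpace ℝ (Fin 3) |
      ∃ q ∈ P₁, ∃ u ∈ Set.Icc (1 : ℝ) (s 2 / (s 2 - q 2)), p = s + u • (q - s)}) :
    vertProj '' (P₁ ∪ P₂) ⊆ U := by
  -- Step 1: projections of points of P₁ are in U.
  have h1 : ∀ q ∈ P₁, vertProj q ∈ U := by
    intro q hq
    obtain ⟨x', hx', hl⟩ := hscan q hq
    rw [hU]
    intro l
    have key : ⟪a l, vertProj q⟫ = ⟪a l, vertProj x'⟫ + ⟪a l, vertProj q - vertProj x'⟫ := by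
      rw [← inner_add_right]
      congr 1
      abel
    have hcs : ⟪a l, vertProj q - vertProj x'⟫ ≤ ‖a l‖ * ζ := by
      calc ⟪a l, vertProj q - vertProj x'⟫ ≤ ‖a l‖ * ‖vertProj q - vertProj x'‖ :=
            real_inner_le_norm _ _
        _ ≤ ‖a l‖ * ζ := by
            apply mul_le_mul_of_nonneg_left _ (norm_nonneg _)
            calc ‖vertProj q - vertProj x'‖ = ‖vertProj (q - x')‖ := by rw [vertProj_sub]
              _ ≤ ‖q - x'‖ := norm_vertProj_le _
              _ ≤ ζ := hx'
    have := hl l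
    linarith [key ▸ (by linarith : ⟪a l, vertProj x'⟫ + ⟪a l, vertProj q - vertProj x'⟫ + b l ≤ ‖a l‖ * ζ)]
  rintro _ ⟨p, hp | hp, rfl⟩
  · exact h1 p hp
  · rw [hP₂] at hp
    obtain ⟨q, hq, u, ⟨hu1, hu2⟩, rfl⟩ := hp
    rw [hU]
    intro l
    set t := s 2 / (s 2 - q 2) with ht
    have hq1 := h1 q hq
    have hqt := hobl q hq
    rw [hU] at hq1 hqt
    have hq1l := hq1 l
    have hqtl := hqt l
    -- rewrite the inner products affinely in u
    have expand : ∀ v : ℝ, ⟪a l, vertProj (s + v • (q - s))⟫ =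
        ⟪a l, vertProj s⟫ + v * ⟪a l, vertProj (q - s)⟫ := by
      intro v
      rw [vertProj_add, vertProj_smul, inner_add_right, real_inner_smul_right]
    have e1 : ⟪a l, vertProj q⟫ = ⟪a l, vertProj s⟫ + 1 * ⟪a l, vertProj (q - s)⟫ := by
      have : vertProj q = vertProj (s + (1:ℝ) • (q - s)) := by
        congr 1
        simp
      rw [this, expand]
    rw [expand] at hqtl ⊢
    rw [e1] at hq1l
    rcases le_or_gt (⟪a l, vertProj (q - s)⟫) 0 with hB | hB
    · nlinarith
    · nlinarith
end

section
/- Let π : ℝ³ → ℝ² denote the vertical projection π(x, y, z) = (x, y). For each of two agents i ∈ {A, B}, let ζᵢ ≥ 0, let sᶦ ∈ ℝ³ be a sensor position with third coordinate sᶦ₃ > 0, and let U_{i,1}, …, U_{i,nᵢ} ⊆ ℝ² be inflated polyhedra, where each U_{i,k} = {x ∈ ℝ² : ⟨a^{ik}_l, x⟩ + b^{ik}_l ≤ ‖a^{ik}_l‖·ζᵢ for all l = 1, …, n^h_{ik}}. Let P ⊆ ℝ³ be an obstacle such that, for each agent i ∈ {A, B}, P decomposes as P = P₁ⁱ ∪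 P₂ⁱ where: every q ∈ P₁ⁱ has third coordinate 0 ≤ q₃ < sᶦ₃ and there exist an index k(q) and a point x' with ‖q − x'‖ ≤ ζᵢ, ⟨a^{ik(q)}_l, π(x')⟩ + b^{ik(q)}_l ≤ 0 for all l, and π(sᶦ + (sᶦ₃/(sᶦ₃ − q₃))·(q − sᶦ)) ∈ U_{i,k(q)}; and every p ∈ P₂ⁱ can be written p = sᶦ + u·(q − sᶦ) for some q ∈ P₁ⁱ and u ∈ [1, sᶦ₃/(sᶦ₃ − q₃)]. Then π(P) ⊆ (U_{A,1} ∪ … ∪ U_{A,n_A}) ∩ (U_{B,1} ∪ … ∪ U_{B,n_B}). -/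
open scoped RealInnerProductSpace

lemma vertProj_norm_le (v : EuclideanSpace ℝ (Fin 3)) : ‖vertProj v‖ ≤ ‖v‖ := by
  rw [EuclideanSpace.norm_eq, EuclideanSpace.norm_eq]
  apply Real.sqrt_le_sqrt
  rw [Fin.sum_univ_two, Fin.sum_univ_three]
  simp [vertProj]
  positivity

lemma vertProj_add_smul (x y : EuclideanSpace ℝ (Fin 3)) (u : ℝ) :
    vertProj (x + u • y) = vertProj x + u • vertProj y := by
  ext i; fin_cases i <;> simp [vertProj]

/-- Geometric form of Theorem 1 of the paper: the updated unsafe region, i.e. the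
intersection over the two agents `i : Fin 2` of the unions of their occupied areas
`U i k`, contains the vertical projection of every true obstacle `P`. For each agent
`i`, the obstacle decomposes as `P = P₁ i ∪ P₂ i` into points visible to the agent's
sensor `s i` (each within `ζ i` of a scan point whose projection satisfies the
unrelaxed constraints of some occupied area, and whose oblique ground projection lies
in that occupied area) and points occluded along rays through visible points. -/
theorem updated_unsafe_region_covers_obstacle
    (ζ : Fin 2 → ℝ) (hζ : ∀ i, 0 ≤ ζ i)
    (s : Fin 2 → EuclideanSpace ℝ (Fin 3)) (hs : ∀ i, 0 < s i 2)
    (n : Fin 2 → ℕ) (nh : (i : Fin 2) → Fin (n i) → ℕ)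
    (a : (i : Fin 2) → (k : Fin (n i)) → Fin (nh i k) → EuclideanSpace ℝ (Fin 2))
    (b : (i : Fin 2) → (k : Fin (n i)) → Fin (nh i k) → ℝ)
    (U : (i : Fin 2) → Fin (n i) → Set (EuclideanSpace ℝ (Fin 2)))
    (hU : ∀ i k, U i k =
      {x : EuclideanSpace ℝ (Fin 2) | ∀ l, ⟪a i k l, x⟫ + b i k l ≤ ‖a i k l‖ * ζ i})
    (P : Set (EuclideanSpace ℝ (Fin 3)))
    (P₁ P₂ : Fin 2 → Set (EuclideanSpace ℝ (Fin 3)))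
    (hdecomp : ∀ i, P = P₁ i ∪ P₂ i)
    (hP₁ : ∀ i, ∀ q ∈ P₁ i, (0 ≤ q 2 ∧ q 2 < s i 2) ∧
      ∃ k : Fin (n i), ∃ x' : EuclideanSpace ℝ (Fin 3),
        ‖q - x'‖ ≤ ζ i ∧ (∀ l, ⟪a i k l, vertProj x'⟫ + b i k l ≤ 0) ∧
        vertProj (s i + (s i 2 / (s i 2 - q 2)) • (q - s i)) ∈ U i k)
    (hP₂ : ∀ i, ∀ p ∈ P₂ i, ∃ q ∈ P₁ i,
      ∃ u ∈ Set.Icc (1 : ℝ) (s i 2 / (s i 2 - q 2)), p = s i + u • (q - s i)) :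
    vertProj '' P ⊆ (⋃ k, U 0 k) ∩ (⋃ k, U 1 k) := by
  -- main claim: for each agent i and p ∈ P, vertProj p is in some U i k
  have main : ∀ i : Fin 2, ∀ p ∈ P, vertProj p ∈ ⋃ k, U i k := by
    intro i p hp
    -- first, a claim for points of P₁ along rays
    have key : ∀ q ∈ P₁ i, ∀ u ∈ Set.Icc (1 : ℝ) (s i 2 / (s i 2 - q 2)),
        vertProj (s i + u • (q - s i)) ∈ ⋃ k, U i k := by
      intro q hq u hu
      obtain ⟨⟨hq0, hq2⟩, k, x', hx', hlin, hproj⟩ := hP₁ i q hq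
      refine Set.mem_iUnion.2 ⟨k, ?_⟩
      rw [hU] at hproj ⊢
      intro l
      have hproj := hproj l
      -- vertProj q ∈ U i k (Claim A)
      have hA : ⟪a i k l, vertProj q⟫ + b i k l ≤ ‖a i k l‖ * ζ i := by
        have h1 : ⟪a i k l, vertProj q - vertProj x'⟫ ≤ ‖a i k l‖ * ζ i := by
          calc ⟪a i k l, vertProj q - vertProj x'⟫
              ≤ ‖a i k l‖ * ‖vertProj q - vertProj x'‖ := real_inner_le_norm _ _
            _ ≤ ‖a i k l‖ * ‖q - x'‖ := by
                have := vertProj_norm_le (q - x')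
                rw [vertProj_sub] at this
                exact mul_le_mul_of_nonneg_left this (norm_nonneg _)
            _ ≤ ‖a i k l‖ * ζ i := mul_le_mul_of_nonneg_left hx' (norm_nonneg _)
        have h2 := hlin l
        have : ⟪a i k l, vertProj q⟫ = ⟪a i k l, vertProj x'⟫
            + ⟪a i k l, vertProj q - vertProj x'⟫ := by
          rw [← inner_add_right, add_sub_cancel]
        linarith
      -- set up affine function in u
      set c : ℝ := ⟪a i k l, vertProj (q - s i)⟫ with hc
      have hval : ∀ v : ℝ, ⟪a i k l, vertProj (s i + v • (q - s i))⟫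
          = ⟪a i k l, vertProj (s i)⟫ + v * c := by
        intro v
        rw [vertProj_add_smul, inner_add_right, real_inner_smul_right]
      set t : ℝ := s i 2 / (s i 2 - q 2) with ht
      have hq1 : vertProj q = vertProj (s i + (1 : ℝ) • (q - s i)) := by
        have h : s i + (1 : ℝ) • (q - s i) = q := by module
        rw [h]
      have hf1 : ⟪a i k l, vertProj (s i)⟫ + 1 * c + b i k l ≤ ‖a i k l‖ * ζ i := by
        rw [← hval]; rw [hq1] at hA; exact hA
      have hft : ⟪a i k l, vertProj (s i)⟫ + t * c + b i k l ≤ ‖a i k l‖ * ζ i := by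
        rw [← hval]; exact hproj
      rw [Set.mem_Icc] at hu
      rw [hval]
      rcases le_or_gt c 0 with hc0 | hc0
      · nlinarith [hu.1]
      · nlinarith [hu.2]
    rw [hdecomp i] at hp
    rcases hp with hp | hp
    · have h1 : (1 : ℝ) ∈ Set.Icc (1 : ℝ) (s i 2 / (s i 2 - p 2)) := by
        obtain ⟨⟨h0, h2⟩, _⟩ := hP₁ i p hp
        constructor
        · exact le_refl 1
        · rw [le_div_iff₀ (by linarith)]; linarith
      have := key p hp 1 h1
      have hpe : s i + (1 : ℝ) • (p - s i) = p := by module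
      rwa [hpe] at this
    · obtain ⟨q, hq, u, hu, rfl⟩ := hP₂ i p hp
      exact key q hq u hu
  rintro _ ⟨p, hp, rfl⟩
  exact ⟨main 0 p hp, main 1 p hp⟩
end
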